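/- Let β, N₀, κ, B, P > 0 and μ, D₀, ν, η ≥ 0 be real numbers with D₀ + νB > 0. The function M ↦ B·log₂(1 + MPβ/(BN₀)) / (P/κ + μ + (D₀ + νB)M + ηB·log₂(1 + MPβ/(BN₀))) on the domain M > 0 attains its maximum at the unique point M* = B N₀ (e^w − 1)/(Pβ), where w is the unique positive real number satisfying (w − 1)e^w = Pβ(P/κ + μ)/(B N₀ (D₀ + νB)) − 1. -/

import Mathlib

/-- The energy efficiency as a function of the (real-valued) number of antennas `M`, for a
fixed transmit power `P` and bandwidth `B`. -/
noncomputable def EE10 (β N₀ κ B P μ D₀ ν η M : ℝ) : ℝ :=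
  B * Real.logb 2 (1 + M * P * β / (B * N₀)) /
    (P / κ + μ + (D₀ + ν * B) * M +
      η * B * Real.logb 2 (1 + M * P * β / (B * N₀)))

lemma tangent10 (w u : ℝ) (hu : 0 < u) :
    Real.log u ≤ u * Real.exp (-w) + w - 1 ∧
    (u ≠ Real.exp w → Real.log u < u * Real.exp (-w) + w - 1) := by
  have h1 : 0 < u * Real.exp (-w) := mul_pos hu (Real.exp_pos _)
  have hlog : Real.log (u * Real.exp (-w)) = Real.log u - w := by
    rw [Real.log_mul (ne_of_gt hu) (ne_of_gt (Real.exp_pos _)), Real.log_exp]; ring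
  constructor
  · have := Real.log_le_sub_one_of_pos h1
    rw [hlog] at this; linarith
  · intro hne
    have hne1 : u * Real.exp (-w) ≠ 1 := by
      intro h
      apply hne
      have hee : Real.exp (-w) * Real.exp w = 1 := by
        rw [← Real.exp_add]; simp
      nlinarith [Real.exp_pos w, Real.exp_pos (-w)]
    have := Real.log_lt_sub_one_of_pos h1 hne1
    rw [hlog] at this; linarith

/-- Lemma 3 of the paper: for given `B, P`, the energy efficiency on `M > 0` attains its
maximum at the unique point `M* = B N₀ (e^w - 1)/(P β)`, where `w > 0` satisfies
`(w - 1) e^w = P β (P/κ + μ)/(B N₀ (D₀ + νB)) - 1`. -/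
theorem stmt_10 (β N₀ κ B P μ D₀ ν η w : ℝ)
    (hβ : 0 < β) (hN : 0 < N₀) (hκ : 0 < κ) (hB : 0 < B) (hP : 0 < P)
    (hμ : 0 ≤ μ) (hD : 0 ≤ D₀) (hν : 0 ≤ ν) (hη : 0 ≤ η)
    (hDB : 0 < D₀ + ν * B) (hw : 0 < w)
    (hwe : (w - 1) * Real.exp w =
      P * β * (P / κ + μ) / (B * N₀ * (D₀ + ν * B)) - 1) :
    ∀ M : ℝ, 0 < M →
      EE10 β N₀ κ B P μ D₀ ν η M ≤
        EE10 β N₀ κ B P μ D₀ ν η (B * N₀ * (Real.exp w - 1) / (P * β)) ∧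
      (EE10 β N₀ κ B P μ D₀ ν η M =
          EE10 β N₀ κ B P μ D₀ ν η (B * N₀ * (Real.exp w - 1) / (P * β)) →
        M = B * N₀ * (Real.exp w - 1) / (P * β)) := by
  intro M hM
  have hL : (0:ℝ) < Real.log 2 := Real.log_pos one_lt_two
  have hBN : 0 < B * N₀ := mul_pos hB hN
  have hPβ : 0 < P * β := mul_pos hP hβ
  have hew1 : 1 < Real.exp w := by
    have h := Real.exp_lt_exp.mpr hw
    rwa [Real.exp_zero] at h
  -- tangent inequality at u = 1 + M P β / (B N₀)
  have hu1 : 1 < 1 + M * P * β / (B * N₀) := by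
    have : 0 < M * P * β / (B * N₀) := by positivity
    linarith
  have hu0 : (0:ℝ) < 1 + M * P * β / (B * N₀) := by linarith
  obtain ⟨ht1, ht2⟩ := tangent10 w _ hu0
  have hacRaw : (P / κ + μ) * (P * β / (B * N₀)) =
      (D₀ + ν * B) * ((w - 1) * Real.exp w + 1) := by
    rw [show (w - 1) * Real.exp w + 1 = P * β * (P / κ + μ) / (B * N₀ * (D₀ + ν * B)) by linarith [hwe]]
    field_simp
    rw [div_self (by linarith)]
  set ew := Real.exp w with hew
  set Ms := B * N₀ * (ew - 1) / (P * β) with hMs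
  set c := P * β / (B * N₀) with hc
  set a := P / κ + μ with ha
  set d := D₀ + ν * B with hd
  set u := 1 + M * P * β / (B * N₀) with hu
  set lu := Real.log u with hlu
  have hMs_pos : 0 < Ms := by
    rw [hMs]; exact div_pos (mul_pos hBN (by linarith)) hPβ
  have hc_pos : 0 < c := by rw [hc]; positivity
  have ha_pos : 0 < a := by rw [ha]; positivity
  have hlu0 : 0 < lu := Real.log_pos hu1
  have hee : Real.exp (-w) * ew = 1 := by
    rw [hew, ← Real.exp_add]; simp
  have hcM : c * M = u - 1 := by rw [hc, hu]; ring
  have hcMs : c * Ms = ew - 1 := by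
    rw [hc, hMs]; field_simp
  have hac : a * c = d * ((w - 1) * ew + 1) := hacRaw
  clear_value ew Ms c a d u lu
  clear hwe
  -- scaled tangent inequality
  have hT : lu * ew ≤ (w - 1) * ew + u := by
    have h := mul_le_mul_of_nonneg_right ht1 (le_of_lt (by rw [hew]; positivity : (0:ℝ) < ew))
    calc lu * ew ≤ (u * Real.exp (-w) + w - 1) * ew := h
      _ = u * (Real.exp (-w) * ew) + (w - 1) * ew := by ring
      _ = (w - 1) * ew + u := by rw [hee]; ring
  -- log values
  have hlogMs : Real.logb 2 (1 + Ms * P * β / (B * N₀)) = w / Real.log 2 := by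
    have h1 : Ms * P * β / (B * N₀) = c * Ms := by rw [hc]; ring
    rw [h1, hcMs]
    have : (1:ℝ) + (ew - 1) = ew := by ring
    rw [this, hew, Real.logb, Real.log_exp]
  have hlogM : Real.logb 2 (1 + M * P * β / (B * N₀)) = lu / Real.log 2 := by
    rw [← hu, Real.logb, ← hlu]
  -- denominators and EE values
  have hden1 : 0 < a + d * M + η * (B * (lu / Real.log 2)) :=
    add_pos_of_pos_of_nonneg (add_pos ha_pos (mul_pos hDB hM)) (by positivity)
  have hden2 : 0 < a + d * Ms + η * (B * (w / Real.log 2)) :=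
    add_pos_of_pos_of_nonneg (add_pos ha_pos (mul_pos hDB hMs_pos)) (by positivity)
  have hEEM : EE10 β N₀ κ B P μ D₀ ν η M
      = (B * (lu / Real.log 2)) / (a + d * M + η * (B * (lu / Real.log 2))) := by
    simp only [EE10, hlogM]; rw [ha, hd]; ring_nf
  have hEEMs : EE10 β N₀ κ B P μ D₀ ν η Ms
      = (B * (w / Real.log 2)) / (a + d * Ms + η * (B * (w / Real.log 2))) := by
    simp only [EE10, hlogMs]; rw [ha, hd]; ring_nf
  -- denominator relations
  have hAdMs : c * (a + d * Ms) = d * (w * ew) := by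
    linear_combination hac + d * hcMs
  have hAdM : c * (a + d * M) = d * ((w - 1) * ew + u) := by
    linear_combination hac + d * hcM
  -- core inequality
  have hcore : lu * (a + d * Ms) ≤ w * (a + d * M) := by
    rw [← mul_le_mul_iff_right₀ hc_pos]
    have hKey := mul_le_mul_of_nonneg_left hT (by positivity : (0:ℝ) ≤ d * w)
    calc c * (lu * (a + d * Ms)) = lu * (c * (a + d * Ms)) := by ring
      _ = lu * (d * (w * ew)) := by rw [hAdMs]
      _ = d * w * (lu * ew) := by ring
      _ ≤ d * w * ((w - 1) * ew + u) := hKey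
      _ = w * (d * ((w - 1) * ew + u)) := by ring
      _ = w * (c * (a + d * M)) := by rw [hAdM]
      _ = c * (w * (a + d * M)) := by ring
  constructor
  · rw [hEEM, hEEMs, div_le_div_iff₀ hden1 hden2]
    have hkey := mul_le_mul_of_nonneg_left hcore
      (by positivity : (0:ℝ) ≤ B / Real.log 2)
    calc B * (lu / Real.log 2) * (a + d * Ms + η * (B * (w / Real.log 2)))
        = B / Real.log 2 * (lu * (a + d * Ms))
          + η * B * B / (Real.log 2 * Real.log 2) * (lu * w) := by ring
      _ ≤ B / Real.log 2 * (w * (a + d * M))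
          + η * B * B / (Real.log 2 * Real.log 2) * (lu * w) := by linarith
      _ = B * (w / Real.log 2) * (a + d * M + η * (B * (lu / Real.log 2))) := by ring
  · intro hEq
    rw [hEEM, hEEMs, div_eq_div_iff (ne_of_gt hden1) (ne_of_gt hden2)] at hEq
    have hcross : lu * (a + d * Ms) = w * (a + d * M) := by
      have hBL : B / Real.log 2 ≠ 0 := by positivity
      apply mul_left_cancel₀ hBL
      linear_combination hEq
    have hueq : u = ew := by
      by_contra hne
      have hst : lu * ew < (w - 1) * ew + u := by
        have h := mul_lt_mul_of_pos_right (ht2 hne) (by rw [hew]; positivity : (0:ℝ) < ew)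
        calc lu * ew < (u * Real.exp (-w) + w - 1) * ew := h
          _ = u * (Real.exp (-w) * ew) + (w - 1) * ew := by ring
          _ = (w - 1) * ew + u := by rw [hee]; ring
      have h2 : lu * (d * (w * ew)) = w * (d * ((w - 1) * ew + u)) := by
        calc lu * (d * (w * ew)) = lu * (c * (a + d * Ms)) := by rw [hAdMs]
          _ = c * (lu * (a + d * Ms)) := by ring
          _ = c * (w * (a + d * M)) := by rw [hcross]
          _ = w * (c * (a + d * M)) := by ring
          _ = w * (d * ((w - 1) * ew + u)) := by rw [hAdM]
      have h3 := mul_lt_mul_of_pos_left hst (mul_pos hDB hw)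
      linarith [h3, h2]
    have : c * M = c * Ms := by rw [hcMs, hcM, hueq]
    exact mul_left_cancel₀ (ne_of_gt hc_pos) this
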